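/- Let (Y_n)_{n≥0} be a sequence of nonnegative, identically distributed random variables on a common probability space. If E[log⁻ Y_0] < ∞ (in particular Y_0 > 0 a.s.), then for any β ∈ (0,1), inf_{n≥0} β^{−n} Y_n > 0 almost surely. -/
import Mathlib

open MeasureTheory Filter
open scoped ENNReal


private lemma aux_tsum_le_lintegral {Ω : Type*} [MeasurableSpace Ω] (μ : Measure Ω)
    {h : Ω → ℝ} (hm : Measurable h) :
    ∑' j : ℕ, μ {ω | (j : ℝ) + 1 ≤ h ω} ≤ ∫⁻ ω, ENNReal.ofReal (h ω) ∂μ := by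
  have hms : ∀ j : ℕ, MeasurableSet {ω | (j : ℝ) + 1 ≤ h ω} := fun j =>
    measurableSet_le measurable_const hm
  calc ∑' j : ℕ, μ {ω | (j : ℝ) + 1 ≤ h ω}
      = ∑' j : ℕ, ∫⁻ ω, Set.indicator {ω | (j : ℝ) + 1 ≤ h ω} 1 ω ∂μ := by
        simp_rw [lintegral_indicator_one (hms _)]
    _ = ∫⁻ ω, ∑' j : ℕ, Set.indicator {ω | (j : ℝ) + 1 ≤ h ω} 1 ω ∂μ :=
        (lintegral_tsum fun j => ((measurable_one.indicator (hms j)).aemeasurable)).symm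
    _ ≤ ∫⁻ ω, ENNReal.ofReal (h ω) ∂μ := by
        apply lintegral_mono
        intro ω
        have key : ∀ j : ℕ, Set.indicator {ω | (j : ℝ) + 1 ≤ h ω} (1 : Ω → ℝ≥0∞) ω
            ≤ if j < ⌊h ω⌋₊ then 1 else 0 := by
          intro j
          by_cases hj : (j : ℝ) + 1 ≤ h ω
          · have hjf : j < ⌊h ω⌋₊ := by
              have : (j + 1 : ℕ) ≤ ⌊h ω⌋₊ := Nat.le_floor (by push_cast; linarith)
              omega
            simp [Set.indicator, hj, hjf]
          · simp [Set.indicator, hj]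
        refine le_trans (Summable.tsum_le_tsum key ENNReal.summable ENNReal.summable) ?_
        have hsum : ∑' j : ℕ, (if j < ⌊h ω⌋₊ then (1 : ℝ≥0∞) else 0) = ⌊h ω⌋₊ := by
          rw [tsum_eq_sum (s := Finset.range ⌊h ω⌋₊) (by
            intro j hj
            simp only [Finset.mem_range, not_lt] at hj
            simp [Nat.not_lt.2 hj])]
          rw [Finset.sum_congr rfl (fun j hj => if_pos (Finset.mem_range.1 hj))]
          simp
        rw [hsum]
        rcases le_or_gt 0 (h ω) with hp | hp
        · rw [← ENNReal.ofReal_natCast]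
          exact ENNReal.ofReal_le_ofReal (Nat.floor_le hp)
        · simp [Nat.floor_of_nonpos hp.le]

/-- If `(Y_n)` are nonnegative, identically distributed random variables with
`E[log⁻ Y_0] < ∞` and `Y_0 > 0` a.s., then for `β ∈ (0,1)`,
`inf_n β^{-n} Y_n > 0` almost surely. -/
theorem stmt_3 {Ω : Type*} [MeasurableSpace Ω] (ℙ : Measure Ω) [IsProbabilityMeasure ℙ]
    (Y : ℕ → Ω → ℝ) (hmeas : ∀ n, Measurable (Y n))
    (hnonneg : ∀ n ω, 0 ≤ Y n ω)
    (hident : ∀ n, ℙ.map (Y n) = ℙ.map (Y 0))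
    (hpos : ∀ᵐ ω ∂ℙ, 0 < Y 0 ω)
    (hint : ∫⁻ ω, ENNReal.ofReal (-Real.log (min 1 (Y 0 ω))) ∂ℙ < ⊤)
    (β : ℝ) (hβ : β ∈ Set.Ioo (0 : ℝ) 1) :
    ∀ᵐ ω ∂ℙ, 0 < ⨅ n : ℕ, Y n ω / β ^ n := by
  obtain ⟨hβ0, hβ1⟩ := hβ
  set r := Real.sqrt β with hr
  have hr0 : 0 < r := Real.sqrt_pos.2 hβ0
  have hr1 : r < 1 := by
    rw [hr, show (1 : ℝ) = Real.sqrt 1 by simp]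
    exact Real.sqrt_lt_sqrt hβ0.le hβ1
  have hβr : β < r := by
    nlinarith [Real.sq_sqrt hβ0.le, hr0]
  set c := -Real.log r with hc
  have hc0 : 0 < c := by
    have := Real.log_neg hr0 hr1
    simp only [hc]; linarith
  set g := fun ω => -Real.log (min 1 (Y 0 ω)) with hg
  have hgmeas : Measurable g := (measurable_const.min (hmeas 0)).log.neg
  have hgnonneg : ∀ ω, 0 ≤ g ω := by
    intro ω
    have h1 : (0 : ℝ) ≤ min 1 (Y 0 ω) := le_min zero_le_one (hnonneg 0 ω)
    have h2 : min 1 (Y 0 ω) ≤ 1 := min_le_left _ _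
    have := Real.log_nonpos h1 h2
    simp only [hg]; linarith
  have hgint : Integrable g ℙ := by
    refine ⟨hgmeas.aestronglyMeasurable, ?_⟩
    rw [hasFiniteIntegral_iff_ofReal (Eventually.of_forall hgnonneg)]
    exact hint
  -- a.e. all Y n are positive
  have hposall : ∀ᵐ ω ∂ℙ, ∀ n, 0 < Y n ω := by
    rw [ae_all_iff]
    intro n
    have h0 : ℙ {ω | Y n ω ≤ 0} = 0 := by
      have heq : {ω | Y n ω ≤ 0} = Y n ⁻¹' Set.Iic 0 := rfl
      rw [heq, ← Measure.map_apply (hmeas n) measurableSet_Iic, hident n,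
        Measure.map_apply (hmeas 0) measurableSet_Iic]
      have := hpos
      rw [ae_iff] at this
      simpa [not_lt, Set.preimage] using this
    rw [ae_iff]
    simpa [not_lt] using h0
  -- Borel-Cantelli sum
  set A : ℕ → Set Ω := fun n => {ω | Y n ω < r ^ n} with hA
  have hAsum : (∑' n, ℙ (A n)) ≠ ⊤ := by
    have key : ∀ n : ℕ, ℙ (A (n + 1)) ≤ ℙ {ω | (n : ℝ) + 1 ≤ g ω / c} := by
      intro n
      have h1 : ℙ (A (n + 1)) = ℙ {ω | Y 0 ω < r ^ (n + 1)} := by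
        show ℙ (Y (n + 1) ⁻¹' Set.Iio (r ^ (n + 1))) = ℙ (Y 0 ⁻¹' Set.Iio (r ^ (n + 1)))
        rw [← Measure.map_apply (hmeas _) measurableSet_Iio, hident,
          Measure.map_apply (hmeas 0) measurableSet_Iio]
      rw [h1]
      apply measure_mono_ae
      filter_upwards [hpos] with ω h0 hω
      have hpow1 : r ^ (n + 1) ≤ 1 := pow_le_one₀ hr0.le hr1.le
      have hlt1 : Y 0 ω < 1 := lt_of_lt_of_le hω hpow1
      have hmin : min 1 (Y 0 ω) = Y 0 ω := min_eq_right hlt1.le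
      have hlog : Real.log (Y 0 ω) < Real.log (r ^ (n + 1)) :=
        Real.log_lt_log h0 hω
      rw [Real.log_pow] at hlog
      have hgω : (n + 1 : ℝ) * c < g ω := by
        simp only [hg, hmin, hc]
        push_cast at hlog ⊢
        linarith
      show (n : ℝ) + 1 ≤ g ω / c
      rw [le_div_iff₀ hc0]
      push_cast
      linarith
    have hdiv : ∀ ω, ENNReal.ofReal (g ω / c) = ENNReal.ofReal (g ω) * ENNReal.ofReal c⁻¹ := by
      intro ω
      rw [div_eq_mul_inv, ENNReal.ofReal_mul (hgnonneg ω)]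
    have htail : ∑' j : ℕ, ℙ {ω | (j : ℝ) + 1 ≤ g ω / c} < ⊤ := by
      refine lt_of_le_of_lt (aux_tsum_le_lintegral ℙ (hgmeas.div_const c)) ?_
      simp_rw [hdiv]
      rw [lintegral_mul_const' _ _ ENNReal.ofReal_ne_top]
      exact ENNReal.mul_lt_top hint ENNReal.ofReal_lt_top
    rw [tsum_eq_zero_add' ENNReal.summable]
    refine ne_of_lt (lt_of_le_of_lt (add_le_add prob_le_one (ENNReal.tsum_le_tsum key)) ?_)
    exact ENNReal.add_lt_top.2 ⟨ENNReal.one_lt_top, htail⟩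
  have hBC : ∀ᵐ ω ∂ℙ, {n | ω ∈ A n}.Finite := MeasureTheory.ae_finite_setOf_mem hAsum
  -- conclude
  filter_upwards [hposall, hBC] with ω h0 hfin
  obtain ⟨N, hN⟩ := hfin.bddAbove
  have hbig : ∀ n, N < n → r ^ n ≤ Y n ω := by
    intro n hn
    by_contra h
    push_neg at h
    exact absurd (hN (Set.mem_setOf.2 h)) (not_le.2 hn)
  set m := min 1 ((Finset.range (N + 1)).inf' (by simp) fun n => Y n ω / β ^ n) with hm
  have hmpos : 0 < m := by
    refine lt_min one_pos ?_
    rw [Finset.lt_inf'_iff]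
    intro n _
    exact div_pos (h0 n) (pow_pos hβ0 n)
  have hbound : ∀ n, m ≤ Y n ω / β ^ n := by
    intro n
    rcases le_or_gt n N with hle | hlt
    · exact le_trans (min_le_right _ _)
        (Finset.inf'_le _ (Finset.mem_range.2 (Nat.lt_succ_of_le hle)))
    · have h1 : (1 : ℝ) ≤ (r / β) ^ n := by
        apply one_le_pow₀
        rw [le_div_iff₀ hβ0]
        linarith
      have h2 : (r / β) ^ n = r ^ n / β ^ n := div_pow r β n
      have h3 : r ^ n / β ^ n ≤ Y n ω / β ^ n := by
        gcongr
        exact hbig n hlt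
      calc m ≤ 1 := min_le_left _ _
        _ ≤ r ^ n / β ^ n := h2 ▸ h1
        _ ≤ Y n ω / β ^ n := h3
  exact lt_of_lt_of_le hmpos (le_ciInf hbound)
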